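/- Let (K,|·|) be a normed field, f ∈ K[z] a polynomial of degree n ≥ 2 which splits over K, ξ ∈ Kⁿ a root-vector of f, and 1 ≤ p ≤ ∞ with conjugate exponent q. Suppose c : [0,1) → ℝ₊ is a nondecreasing function such that c(t) ≤ (n−1)^{1/p}((1+t)^{1/(n−1)} − 1) for all t ∈ [0,1), and suppose there exists σ ∈ (0,1) such that t·c(t) ≤ c(t²)·(1 − 2^{1/q}(1+t)c(t)) for all t ∈ [0,σ]. If x⁰ ∈ Kⁿ has pairwise distinct components and ‖(x⁰ − ξ)/d(x⁰)‖_p ≤ c(σ), then f has only simple zeros in K and the Weierstrass iteration x^{k+1} = x^k − W(x^k) is well defined and converges to ξ with, for all k ≥ 0 and each index i: |x^{k+1}_i − ξ_i| ≤ σ^{2^k} |x^k_i − ξ_i| and |x^k_i − ξ_i| ≤ σ^{2^k − 1} |x⁰_i − ξ_i|. -/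

import Mathlib

open Finset Filter Topology
open scoped ENNReal

noncomputable def pnorm {n : ℕ} (p : ℝ≥0∞) (v : Fin n → ℝ) : ℝ :=
  if p = ⊤ then ⨆ i, |v i| else (∑ i, |v i| ^ p.toReal) ^ (1 / p.toReal)

noncomputable def epow (a : ℝ) (p : ℝ≥0∞) : ℝ :=
  if p = ⊤ then 1 else a ^ (1 / p.toReal)

noncomputable def dsep {K : Type*} [NormedField K] {n : ℕ} (x : Fin n → K) (i : Fin n) : ℝ :=
  sInf {r : ℝ | ∃ j, j ≠ i ∧ r = ‖x i - x j‖}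

noncomputable def Wcorr {K : Type*} [NormedField K] {n : ℕ} (f : Polynomial K)
    (x : Fin n → K) (i : Fin n) : K :=
  Polynomial.eval (x i) f / (f.leadingCoeff * ∏ j ∈ Finset.univ.erase i, (x i - x j))

def IsRootVector {K : Type*} [NormedField K] {n : ℕ} (f : Polynomial K) (ξ : Fin n → K) : Prop :=
  ∀ z : K, Polynomial.eval z f = f.leadingCoeff * ∏ i, (z - ξ i)

/-! ### Auxiliary lemmas -/

lemma WA.norm_prod_le {ι K : Type*} [NormedField K] (s : Finset ι) (a : ι → K) :
    ‖∏ j ∈ s, (1 + a j)‖ ≤ ∏ j ∈ s, (1 + ‖a j‖) := by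
  rw [norm_prod]
  exact Finset.prod_le_prod (fun j _ => norm_nonneg _)
    (fun j _ => (norm_add_le _ _).trans (by simp))

lemma WA.norm_prod_sub_one {ι K : Type*} [NormedField K] (s : Finset ι) (a : ι → K) :
    ‖(∏ j ∈ s, (1 + a j)) - 1‖ ≤ (∏ j ∈ s, (1 + ‖a j‖)) - 1 := by
  classical
  induction s using Finset.induction_on with
  | empty => simp
  | @insert i s hi ih =>
    rw [Finset.prod_insert hi, Finset.prod_insert hi]
    have hP := WA.norm_prod_le s a
    calc ‖(1 + a i) * ∏ j ∈ s, (1 + a j) - 1‖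
        = ‖((∏ j ∈ s, (1 + a j)) - 1) + a i * ∏ j ∈ s, (1 + a j)‖ := by ring_nf
      _ ≤ ‖(∏ j ∈ s, (1 + a j)) - 1‖ + ‖a i‖ * ‖∏ j ∈ s, (1 + a j)‖ := by
          refine (norm_add_le _ _).trans ?_
          rw [norm_mul]
      _ ≤ ((∏ j ∈ s, (1 + ‖a j‖)) - 1) + ‖a i‖ * ∏ j ∈ s, (1 + ‖a j‖) := by
          gcongr
      _ = (1 + ‖a i‖) * ∏ j ∈ s, (1 + ‖a j‖) - 1 := by ring

lemma WA.one_le_prod {ι : Type*} (s : Finset ι) (b : ι → ℝ) (hb : ∀ j ∈ s, 0 ≤ b j) :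
    (1:ℝ) ≤ ∏ j ∈ s, (1 + b j) := by
  calc (1:ℝ) = ∏ _j ∈ s, (1:ℝ) := (Finset.prod_const_one).symm
    _ ≤ ∏ j ∈ s, (1 + b j) :=
      Finset.prod_le_prod (fun _ _ => zero_le_one) (fun j hj => by linarith [hb j hj])

lemma WA.prod_one_add_le_pow {ι : Type*} (s : Finset ι) (b : ι → ℝ) (hb : ∀ j ∈ s, 0 ≤ b j)
    (hcard : s.card ≠ 0) :
    ∏ j ∈ s, (1 + b j) ≤ (1 + (∑ j ∈ s, b j) / s.card) ^ s.card := by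
  have hm : (0:ℝ) < s.card := by positivity
  have h1 : ∀ j ∈ s, (0:ℝ) ≤ 1 + b j := fun j hj => by linarith [hb j hj]
  have hprod : (0:ℝ) ≤ ∏ j ∈ s, (1 + b j) := Finset.prod_nonneg h1
  have key : ((∏ j ∈ s, (1 + b j)) ^ ((1:ℝ)/s.card)) ≤ 1 + (∑ j ∈ s, b j)/s.card := by
    rw [← Real.finset_prod_rpow s _ h1 ((1:ℝ)/s.card)]
    have := Real.geom_mean_le_arith_mean_weighted s (fun _ => (1:ℝ)/s.card) (fun j => 1 + b j)
      (fun j _ => by positivity) (by rw [Finset.sum_const, nsmul_eq_mul]; field_simp) h1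
    refine this.trans (le_of_eq ?_)
    rw [← Finset.mul_sum, Finset.sum_add_distrib, Finset.sum_const, nsmul_eq_mul, mul_one]
    field_simp
  have h2 := Real.rpow_le_rpow (Real.rpow_nonneg hprod _) key hm.le
  rw [← Real.rpow_mul hprod, one_div, inv_mul_cancel₀ hm.ne', Real.rpow_one,
    Real.rpow_natCast] at h2
  exact h2

lemma WA.abs_le_isup {n : ℕ} (v : Fin n → ℝ) (i : Fin n) : |v i| ≤ ⨆ j, |v j| :=
  le_ciSup (Set.Finite.bddAbove (Set.finite_range (fun j => |v j|))) i

lemma WA.pnorm_nonneg {n : ℕ} (p : ℝ≥0∞) (v : Fin n → ℝ) : 0 ≤ pnorm p v := by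
  unfold pnorm
  split
  · exact Real.iSup_nonneg (f := fun i => |v i|) (fun i => abs_nonneg _)
  · positivity

lemma WA.toReal_one_le {p : ℝ≥0∞} (hp : 1 ≤ p) (hp' : p ≠ ⊤) : (1:ℝ) ≤ p.toReal := by
  have := ENNReal.toReal_mono hp' hp
  simpa using this

lemma WA.abs_le_pnorm {n : ℕ} {p : ℝ≥0∞} (hp : 1 ≤ p) (v : Fin n → ℝ) (i : Fin n) :
    |v i| ≤ pnorm p v := by
  unfold pnorm
  split
  · exact WA.abs_le_isup v i
  · rename_i hp'
    have hr : (1:ℝ) ≤ p.toReal := WA.toReal_one_le hp hp'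
    have hr0 : (0:ℝ) < p.toReal := by linarith
    have h1 : |v i| ^ p.toReal ≤ ∑ j, |v j| ^ p.toReal :=
      Finset.single_le_sum (f := fun j => |v j| ^ p.toReal)
        (fun j _ => Real.rpow_nonneg (abs_nonneg _) _) (Finset.mem_univ i)
    calc |v i| = (|v i| ^ p.toReal) ^ ((1:ℝ)/p.toReal) := by
          rw [← Real.rpow_mul (abs_nonneg _), mul_one_div, div_self hr0.ne', Real.rpow_one]
      _ ≤ (∑ j, |v j| ^ p.toReal) ^ ((1:ℝ)/p.toReal) :=
          Real.rpow_le_rpow (Real.rpow_nonneg (abs_nonneg _) _) h1 (by positivity)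

lemma WA.q_facts {p q : ℝ≥0∞} (hpq : 1 / p + 1 / q = 1) :
    ENNReal.HolderConjugate p q := ⟨by simpa [one_div] using hpq⟩

lemma WA.sum_abs_le_pnorm {n : ℕ} {p q : ℝ≥0∞} (hpq : 1 / p + 1 / q = 1)
    (v : Fin n → ℝ) (S : Finset (Fin n)) :
    ∑ i ∈ S, |v i| ≤ epow (S.card : ℝ) q * pnorm p v := by
  have hconj := WA.q_facts hpq
  have hp1 : 1 ≤ p := @ENNReal.HolderConjugate.one_le p q hconj
  have hq1 : 1 ≤ q := @ENNReal.HolderConjugate.one_le q p (WA.q_facts (by rw [add_comm]; exact hpq))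
  by_cases hptop : p = ⊤
  · -- q = 1
    have hq : q = 1 := by
      have := @ENNReal.HolderConjugate.inv_add_inv_eq_one p q hconj
      rw [hptop] at this
      simp at this
      simpa using this
    subst hq
    have hpn : pnorm p v = ⨆ i, |v i| := by unfold pnorm; rw [if_pos hptop]
    have he : epow (S.card : ℝ) 1 = (S.card : ℝ) := by
      unfold epow
      rw [if_neg (by simp)]
      simp
    rw [hpn, he]
    calc ∑ i ∈ S, |v i| ≤ ∑ _i ∈ S, ⨆ j, |v j| :=
          Finset.sum_le_sum (fun i _ => WA.abs_le_isup v i)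
      _ = (S.card : ℝ) * ⨆ j, |v j| := by rw [Finset.sum_const, nsmul_eq_mul]
  · by_cases hqtop : q = ⊤
    · -- p = 1
      have hp : p = 1 := by
        have := @ENNReal.HolderConjugate.inv_add_inv_eq_one p q hconj
        rw [hqtop] at this
        simp at this
        simpa using this
      subst hp
      have he : epow (S.card : ℝ) q = 1 := by unfold epow; rw [if_pos hqtop]
      have hpn : pnorm 1 v = ∑ i, |v i| := by
        unfold pnorm
        rw [if_neg (by simp)]
        simp
      rw [he, hpn, one_mul]
      exact Finset.sum_le_sum_of_subset_of_nonneg (Finset.subset_univ S)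
        (fun i _ _ => abs_nonneg _)
    · -- both finite
      set r := p.toReal with hr
      set r' := q.toReal with hr'
      have hpne1 : p ≠ 1 := by
        rintro rfl
        have h0 : (1:ℝ≥0∞) + q⁻¹ = 1 + 0 := by simpa [one_div] using hpq
        have : q⁻¹ = 0 := (ENNReal.add_right_inj ENNReal.one_ne_top).mp h0
        exact hqtop (by simpa using this)
      have hp1' : 1 < p := lt_of_le_of_ne hp1 (Ne.symm hpne1)
      have hrc : Real.HolderConjugate r r' := by
        rw [Real.holderConjugate_iff]; constructor
        · have := ENNReal.toReal_strict_mono hptop hp1'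
          simpa using this
        · have h1 : (1/p).toReal = r⁻¹ := by
            rw [one_div, ENNReal.toReal_inv]
          have h2 : (1/q).toReal = r'⁻¹ := by
            rw [one_div, ENNReal.toReal_inv]
          have h3 : (1/p + 1/q).toReal = (1/p).toReal + (1/q).toReal := by
            apply ENNReal.toReal_add
            · rw [one_div]; exact ENNReal.inv_ne_top.mpr (@ENNReal.HolderConjugate.ne_zero p q hconj)
            · rw [one_div]; exact ENNReal.inv_ne_top.mpr (@ENNReal.HolderConjugate.ne_zero q p (WA.q_facts (by rw [add_comm]; exact hpq)))
          rw [← h1, ← h2, ← h3, hpq, ENNReal.toReal_one]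
      have hr0 : 0 < r := hrc.pos
      have hr'0 : 0 < r' := hrc.symm.pos
      have hhold := Real.inner_le_Lp_mul_Lq_of_nonneg S (f := fun i => |v i|)
        (g := fun _ => (1:ℝ)) hrc (fun i _ => abs_nonneg _) (fun i _ => zero_le_one)
      simp only [mul_one, Real.one_rpow, Finset.sum_const, nsmul_eq_mul] at hhold
      have hsub : (∑ i ∈ S, |v i| ^ r) ^ ((1:ℝ)/r) ≤ (∑ i, |v i| ^ r) ^ ((1:ℝ)/r) := by
        apply Real.rpow_le_rpow
        · positivity
        · exact Finset.sum_le_sum_of_subset_of_nonneg (Finset.subset_univ S)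
            (fun i _ _ => Real.rpow_nonneg (abs_nonneg _) _)
        · positivity
      have hpn : pnorm p v = (∑ i, |v i| ^ r) ^ ((1:ℝ)/r) := by
        unfold pnorm
        rw [if_neg hptop]
      have he : epow (S.card : ℝ) q = (S.card : ℝ) ^ ((1:ℝ)/r') := by
        unfold epow
        rw [if_neg hqtop]
      rw [hpn, he]
      calc ∑ i ∈ S, |v i| ≤ (∑ i ∈ S, |v i| ^ r) ^ ((1:ℝ)/r) * ((S.card : ℝ)) ^ ((1:ℝ)/r') :=
            hhold
        _ ≤ (∑ i, |v i| ^ r) ^ ((1:ℝ)/r) * ((S.card : ℝ)) ^ ((1:ℝ)/r') := by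
            apply mul_le_mul_of_nonneg_right hsub (by positivity)
        _ = (S.card : ℝ) ^ ((1:ℝ)/r') * (∑ i, |v i| ^ r) ^ ((1:ℝ)/r) := mul_comm _ _

lemma WA.pnorm_le_mul {n : ℕ} {p : ℝ≥0∞} (hp : 1 ≤ p) (hn : 0 < n)
    {v w : Fin n → ℝ} {s : ℝ} (hs : 0 ≤ s) (h : ∀ i, |v i| ≤ s * w i) (hw : ∀ i, 0 ≤ w i) :
    pnorm p v ≤ s * pnorm p w := by
  haveI : Nonempty (Fin n) := Fin.pos_iff_nonempty.mp hn
  unfold pnorm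
  split
  · apply ciSup_le
    intro i
    refine (h i).trans (mul_le_mul_of_nonneg_left ?_ hs)
    calc w i = |w i| := (abs_of_nonneg (hw i)).symm
      _ ≤ ⨆ j, |w j| := WA.abs_le_isup w i
  · rename_i hp'
    have hr : (1:ℝ) ≤ p.toReal := WA.toReal_one_le hp hp'
    have hr0 : (0:ℝ) < p.toReal := by linarith
    set r := p.toReal
    have h1 : ∀ i, |v i| ^ r ≤ s ^ r * |w i| ^ r := by
      intro i
      rw [← Real.mul_rpow hs (abs_nonneg _), abs_of_nonneg (hw i)]
      exact Real.rpow_le_rpow (abs_nonneg _) (h i) hr0.le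
    calc (∑ i, |v i| ^ r) ^ ((1:ℝ)/r) ≤ (∑ i, s ^ r * |w i| ^ r) ^ ((1:ℝ)/r) := by
          apply Real.rpow_le_rpow (by positivity) (Finset.sum_le_sum fun i _ => h1 i) (by positivity)
      _ = (s ^ r * ∑ i, |w i| ^ r) ^ ((1:ℝ)/r) := by rw [← Finset.mul_sum]
      _ = s * (∑ i, |w i| ^ r) ^ ((1:ℝ)/r) := by
          rw [Real.mul_rpow (by positivity) (by positivity), ← Real.rpow_mul hs,
            mul_one_div, div_self hr0.ne', Real.rpow_one]

lemma WA.epow_nonneg {a : ℝ} (ha : 0 ≤ a) (p : ℝ≥0∞) : 0 ≤ epow a p := by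
  unfold epow
  split
  · norm_num
  · positivity

lemma WA.epow_mul_epow {a : ℝ} (ha : 0 < a) {p q : ℝ≥0∞} (hpq : 1 / p + 1 / q = 1) :
    epow a q * epow a p = a := by
  have hconj := WA.q_facts hpq
  by_cases hptop : p = ⊤
  · have hq : q = 1 := by
      have := @ENNReal.HolderConjugate.inv_add_inv_eq_one p q hconj
      rw [hptop] at this
      simp at this
      simpa using this
    subst hq
    unfold epow
    rw [if_pos hptop, if_neg (by simp)]
    simp
  · by_cases hqtop : q = ⊤
    · have hp : p = 1 := by
        have := @ENNReal.HolderConjugate.inv_add_inv_eq_one p q hconj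
        rw [hqtop] at this
        simp at this
        simpa using this
      subst hp
      unfold epow
      rw [if_pos hqtop, if_neg (by simp)]
      simp
    · unfold epow
      rw [if_neg hptop, if_neg hqtop]
      rw [← Real.rpow_add ha]
      have h1 : (1/p).toReal = 1/p.toReal := by rw [one_div, one_div, ENNReal.toReal_inv]
      have h2 : (1/q).toReal = 1/q.toReal := by rw [one_div, one_div, ENNReal.toReal_inv]
      have h3 : (1/p + 1/q).toReal = (1/p).toReal + (1/q).toReal := by
        apply ENNReal.toReal_add
        · rw [one_div]; exact ENNReal.inv_ne_top.mpr (@ENNReal.HolderConjugate.ne_zero p q hconj)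
        · rw [one_div]; exact ENNReal.inv_ne_top.mpr (@ENNReal.HolderConjugate.ne_zero q p (WA.q_facts (by rw [add_comm]; exact hpq)))
      have : 1/q.toReal + 1/p.toReal = 1 := by
        rw [← h1, ← h2, add_comm, ← h3, hpq, ENNReal.toReal_one]
      rw [this, Real.rpow_one]

section dsep
variable {K : Type*} [NormedField K] {n : ℕ}

lemma WA.dsep_set_eq (x : Fin n → K) (i : Fin n) :
    {r : ℝ | ∃ j, j ≠ i ∧ r = ‖x i - x j‖} = (fun j => ‖x i - x j‖) '' {j | j ≠ i} := by
  ext r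
  simp [eq_comm]

lemma WA.dsep_set_finite (x : Fin n → K) (i : Fin n) :
    {r : ℝ | ∃ j, j ≠ i ∧ r = ‖x i - x j‖}.Finite := by
  rw [WA.dsep_set_eq]
  exact (Set.toFinite _).image _

lemma WA.dsep_set_nonempty (hn : 2 ≤ n) (x : Fin n → K) (i : Fin n) :
    {r : ℝ | ∃ j, j ≠ i ∧ r = ‖x i - x j‖}.Nonempty := by
  obtain ⟨j, hj⟩ := Fintype.exists_ne_of_one_lt_card (by simp; omega) i
  exact ⟨‖x i - x j‖, j, hj, rfl⟩

lemma WA.dsep_le {x : Fin n → K} {i j : Fin n} (hij : j ≠ i) : dsep x i ≤ ‖x i - x j‖ :=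
  csInf_le (WA.dsep_set_finite x i).bddBelow ⟨j, hij, rfl⟩

lemma WA.le_dsep (hn : 2 ≤ n) {x : Fin n → K} {i : Fin n} {r : ℝ}
    (h : ∀ j, j ≠ i → r ≤ ‖x i - x j‖) : r ≤ dsep x i := by
  apply le_csInf (WA.dsep_set_nonempty hn x i)
  rintro _ ⟨j, hj, rfl⟩
  exact h j hj

lemma WA.dsep_pos (hn : 2 ≤ n) {x : Fin n → K} (hx : Function.Injective x) (i : Fin n) :
    0 < dsep x i := by
  have hmem := Set.Nonempty.csInf_mem (WA.dsep_set_nonempty hn x i) (WA.dsep_set_finite x i)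
  obtain ⟨j, hj, hr⟩ := hmem
  rw [dsep, hr]
  exact norm_pos_iff.mpr (sub_ne_zero_of_ne (fun h => hj (hx h.symm)))

end dsep

lemma WA.wcorr_eq {K : Type*} [NormedField K] {n : ℕ} (f : Polynomial K) (ξ : Fin n → K)
    (hroot : IsRootVector f ξ) (ha : f.leadingCoeff ≠ 0) (x : Fin n → K) (i : Fin n) :
    Wcorr f x i = (x i - ξ i) * ∏ j ∈ Finset.univ.erase i, ((x i - ξ j) / (x i - x j)) := by
  unfold Wcorr
  rw [hroot (x i)]
  rw [← Finset.mul_prod_erase Finset.univ (fun j => x i - ξ j) (Finset.mem_univ i)]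
  rw [mul_div_mul_left _ _ ha]
  rw [Finset.prod_div_distrib]
  rw [mul_div_assoc]


lemma WA.step {K : Type*} [NormedField K] {n : ℕ} (hn : 2 ≤ n)
    (f : Polynomial K) (ξ : Fin n → K) (hroot : IsRootVector f ξ) (ha : f.leadingCoeff ≠ 0)
    (p q : ℝ≥0∞) (hp : 1 ≤ p) (hpq : 1 / p + 1 / q = 1)
    (c : ℝ → ℝ)
    (hc_nonneg : ∀ t ∈ Set.Ico (0:ℝ) 1, 0 ≤ c t)
    (hc_bound : ∀ t ∈ Set.Ico (0:ℝ) 1,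
      c t ≤ epow ((n : ℝ) - 1) p * ((1 + t) ^ ((1:ℝ) / ((n:ℝ) - 1)) - 1))
    (σ : ℝ) (hσ : σ ∈ Set.Ioo (0:ℝ) 1)
    (hσc : ∀ t ∈ Set.Icc (0:ℝ) σ,
      t * c t ≤ c (t ^ 2) * (1 - epow 2 q * (1 + t) * c t))
    (y : Fin n → K) (hy : Function.Injective y) (t : ℝ) (ht0 : 0 < t) (htσ : t ≤ σ)
    (hE : pnorm p (fun i => ‖y i - ξ i‖ / dsep y i) ≤ c t) :
    (∀ i, ‖(y i - Wcorr f y i) - ξ i‖ ≤ t * ‖y i - ξ i‖) ∧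
    Function.Injective (fun i => y i - Wcorr f y i) ∧
    pnorm p (fun i => ‖(y i - Wcorr f y i) - ξ i‖ / dsep (fun j => y j - Wcorr f y j) i)
      ≤ c (t ^ 2) := by
  obtain ⟨hσ0, hσ1⟩ := hσ
  have ht1 : t < 1 := lt_of_le_of_lt htσ hσ1
  have htI : t ∈ Set.Ico (0:ℝ) 1 := ⟨ht0.le, ht1⟩
  have hct : 0 ≤ c t := hc_nonneg t htI
  have hd : ∀ i, 0 < dsep y i := WA.dsep_pos hn hy
  set b : Fin n → ℝ := fun i => ‖y i - ξ i‖ / dsep y i with hbdef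
  have hb0 : ∀ i, 0 ≤ b i := fun i => div_nonneg (norm_nonneg _) (hd i).le
  have hbE : ∀ i, b i ≤ c t := fun i => by
    have h := WA.abs_le_pnorm hp b i
    rw [abs_of_nonneg (hb0 i)] at h
    exact h.trans hE
  have hbd : ∀ i, b i * dsep y i = ‖y i - ξ i‖ := fun i => div_mul_cancel₀ _ (hd i).ne'
  have hN1 : (0:ℝ) < (n:ℝ) - 1 := by
    have h2n : (2:ℝ) ≤ (n:ℝ) := by exact_mod_cast hn
    linarith
  have hcast : ((n - 1 : ℕ) : ℝ) = (n:ℝ) - 1 := by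
    rw [Nat.cast_sub (by omega : 1 ≤ n)]
    simp
  have hcard : ∀ i : Fin n, (Finset.univ.erase i).card = n - 1 := fun i => by
    rw [Finset.card_erase_of_mem (Finset.mem_univ i), Finset.card_univ, Fintype.card_fin]
  have hsum : ∀ i : Fin n, ∑ j ∈ Finset.univ.erase i, b j
      ≤ ((n:ℝ) - 1) * ((1 + t) ^ ((1:ℝ)/((n:ℝ) - 1)) - 1) := by
    intro i
    have h1 : ∑ j ∈ Finset.univ.erase i, b j = ∑ j ∈ Finset.univ.erase i, |b j| :=
      Finset.sum_congr rfl (fun j _ => (abs_of_nonneg (hb0 j)).symm)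
    have h2 := WA.sum_abs_le_pnorm hpq b (Finset.univ.erase i)
    rw [hcard i, hcast] at h2
    have h3 : epow ((n:ℝ) - 1) q * pnorm p b
        ≤ epow ((n:ℝ) - 1) q * (epow ((n:ℝ) - 1) p * ((1 + t) ^ ((1:ℝ)/((n:ℝ) - 1)) - 1)) :=
      mul_le_mul_of_nonneg_left (hE.trans (hc_bound t htI)) (WA.epow_nonneg hN1.le q)
    rw [← mul_assoc, WA.epow_mul_epow hN1 hpq] at h3
    rw [h1]
    exact h2.trans h3
  have hprodb : ∀ i, (∏ j ∈ Finset.univ.erase i, (1 + b j)) ≤ 1 + t := by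
    intro i
    have hc0' : (Finset.univ.erase i).card ≠ 0 := by rw [hcard i]; omega
    have h1 := WA.prod_one_add_le_pow (Finset.univ.erase i) b (fun j _ => hb0 j) hc0'
    have hS0 : 0 ≤ ∑ j ∈ Finset.univ.erase i, b j := Finset.sum_nonneg (fun j _ => hb0 j)
    have hbase : 1 + (∑ j ∈ Finset.univ.erase i, b j) / ((Finset.univ.erase i).card : ℝ)
        ≤ (1 + t) ^ ((1:ℝ)/((n:ℝ) - 1)) := by
      rw [hcard i, hcast]
      have h4 : (∑ j ∈ Finset.univ.erase i, b j) / ((n:ℝ) - 1)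
          ≤ (1 + t) ^ ((1:ℝ)/((n:ℝ) - 1)) - 1 := by
        rw [div_le_iff₀ hN1]
        have := hsum i
        linarith
      linarith
    have hbase0 : 0 ≤ 1 + (∑ j ∈ Finset.univ.erase i, b j) / ((Finset.univ.erase i).card : ℝ) := by
      have : 0 ≤ (∑ j ∈ Finset.univ.erase i, b j) / ((Finset.univ.erase i).card : ℝ) :=
        div_nonneg hS0 (Nat.cast_nonneg _)
      linarith
    have hpow := pow_le_pow_left₀ hbase0 hbase (Finset.univ.erase i).card
    have hfin : ((1 + t) ^ ((1:ℝ)/((n:ℝ) - 1))) ^ (Finset.univ.erase i).card = 1 + t := by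
      rw [hcard i, ← Real.rpow_natCast ((1 + t) ^ ((1:ℝ)/((n:ℝ) - 1))) (n - 1),
        ← Real.rpow_mul (by linarith : (0:ℝ) ≤ 1 + t), hcast, one_div,
        inv_mul_cancel₀ hN1.ne', Real.rpow_one]
    calc ∏ j ∈ Finset.univ.erase i, (1 + b j)
        ≤ (1 + (∑ j ∈ Finset.univ.erase i, b j) / ((Finset.univ.erase i).card : ℝ))
            ^ (Finset.univ.erase i).card := h1
      _ ≤ ((1 + t) ^ ((1:ℝ)/((n:ℝ) - 1))) ^ (Finset.univ.erase i).card := hpow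
      _ = 1 + t := hfin
  have hne : ∀ i j : Fin n, j ≠ i → y i - y j ≠ 0 := fun i j hj =>
    sub_ne_zero_of_ne (fun h => hj (hy h).symm)
  have hratio : ∀ i j, j ≠ i → (y i - ξ j)/(y i - y j) = 1 + (y j - ξ j)/(y i - y j) := by
    intro i j hj
    field_simp [hne i j hj]
    ring
  have hanorm : ∀ i j, j ≠ i → ‖(y j - ξ j)/(y i - y j)‖ ≤ b j := by
    intro i j hj
    rw [norm_div]
    have hdj : dsep y j ≤ ‖y i - y j‖ := by
      rw [norm_sub_rev]
      exact WA.dsep_le (Ne.symm hj)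
    exact div_le_div_of_nonneg_left (norm_nonneg _) (hd j) hdj
  have hA : ∀ i, Wcorr f y i
      = (y i - ξ i) * ∏ j ∈ Finset.univ.erase i, ((y i - ξ j)/(y i - y j)) :=
    fun i => WA.wcorr_eq f ξ hroot ha y i
  have hAprod : ∀ i, ∏ j ∈ Finset.univ.erase i, ((y i - ξ j)/(y i - y j))
      = ∏ j ∈ Finset.univ.erase i, (1 + (y j - ξ j)/(y i - y j)) :=
    fun i => Finset.prod_congr rfl (fun j hj => hratio i j (Finset.mem_erase.mp hj).1)
  have hQ : ∀ i, ∏ j ∈ Finset.univ.erase i, (1 + ‖(y j - ξ j)/(y i - y j)‖) ≤ 1 + t := by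
    intro i
    refine le_trans (Finset.prod_le_prod (fun j _ => by positivity) (fun j hj => ?_)) (hprodb i)
    exact add_le_add_right (hanorm i j (Finset.mem_erase.mp hj).1) 1
  have hA1 : ∀ i, ‖(∏ j ∈ Finset.univ.erase i, ((y i - ξ j)/(y i - y j))) - 1‖ ≤ t := by
    intro i
    rw [hAprod i]
    refine (WA.norm_prod_sub_one _ _).trans ?_
    linarith [hQ i]
  have hAle : ∀ i, ‖∏ j ∈ Finset.univ.erase i, ((y i - ξ j)/(y i - y j))‖ ≤ 1 + t := by
    intro i
    rw [hAprod i]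
    exact (WA.norm_prod_le _ _).trans (hQ i)
  have hstep1 : ∀ i, ‖(y i - Wcorr f y i) - ξ i‖ ≤ t * ‖y i - ξ i‖ := by
    intro i
    have h1 : (y i - Wcorr f y i) - ξ i
        = (y i - ξ i) * (1 - ∏ j ∈ Finset.univ.erase i, ((y i - ξ j)/(y i - y j))) := by
      rw [hA i]; ring
    rw [h1, norm_mul, mul_comm]
    apply mul_le_mul_of_nonneg_right _ (norm_nonneg _)
    rw [norm_sub_rev]
    exact hA1 i
  have hW : ∀ i, ‖Wcorr f y i‖ ≤ (1 + t) * ‖y i - ξ i‖ := by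
    intro i
    rw [hA i, norm_mul, mul_comm]
    exact mul_le_mul_of_nonneg_right (hAle i) (norm_nonneg _)
  rcases eq_or_lt_of_le hct with hc0 | hc0
  · -- degenerate case : c t = 0, so y = ξ
    have hyξ : ∀ i, y i = ξ i := by
      intro i
      have h1 : b i = 0 := le_antisymm ((hbE i).trans_eq hc0.symm) (hb0 i)
      have h2 : ‖y i - ξ i‖ = 0 := by
        rcases div_eq_zero_iff.mp h1 with h | h
        · exact h
        · exact absurd h (hd i).ne'
      exact sub_eq_zero.mp (norm_eq_zero.mp h2)
    have hW0 : ∀ i, Wcorr f y i = 0 := fun i => by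
      rw [hA i, sub_eq_zero.mpr (hyξ i), zero_mul]
    have hyy : (fun i => y i - Wcorr f y i) = y := funext fun i => by rw [hW0 i, sub_zero]
    refine ⟨fun i => ?_, ?_, ?_⟩
    · rw [hW0 i, sub_zero, sub_eq_zero.mpr (hyξ i)]
      simp [mul_nonneg ht0.le (norm_nonneg (y i - ξ i))]
    · rw [hyy]; exact hy
    · have ht2I : t ^ 2 ∈ Set.Ico (0:ℝ) 1 := ⟨sq_nonneg t, by nlinarith⟩
      have h0 : pnorm p b ≤ 0 * pnorm p (fun _ : Fin n => (1:ℝ)) :=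
        WA.pnorm_le_mul hp (by omega) (le_refl 0)
          (fun i => by
            rw [hbdef]
            simp only
            rw [sub_eq_zero.mpr (hyξ i)]
            simp)
          (fun i => zero_le_one)
      simp only [hW0, sub_zero]
      calc pnorm p (fun i => ‖y i - ξ i‖ / dsep (fun j => y j) i)
          ≤ 0 * pnorm p (fun _ : Fin n => (1:ℝ)) := h0
        _ = 0 := zero_mul _
        _ ≤ c (t ^ 2) := hc_nonneg _ ht2I
  · -- main case : c t > 0
    have hσct := hσc t ⟨ht0.le, htσ⟩
    have ht2I : t ^ 2 ∈ Set.Ico (0:ℝ) 1 := ⟨sq_nonneg t, by nlinarith⟩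
    have hct2 : 0 ≤ c (t ^ 2) := hc_nonneg _ ht2I
    set lam : ℝ := 1 - epow 2 q * (1 + t) * c t with hlamdef
    have hlam_pos : 0 < lam := by
      rcases le_or_gt lam 0 with hl | hl
      · exfalso
        have h1 : 0 < t * c t := mul_pos ht0 hc0
        have h2 : c (t ^ 2) * lam ≤ 0 := mul_nonpos_of_nonneg_of_nonpos hct2 hl
        linarith
      · exact hl
    have hpair : ∀ i j : Fin n, i ≠ j → b i + b j ≤ epow 2 q * c t := by
      intro i j hij
      have h1 := WA.sum_abs_le_pnorm hpq b ({i, j} : Finset (Fin n))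
      rw [Finset.sum_pair hij, Finset.card_pair hij,
        abs_of_nonneg (hb0 i), abs_of_nonneg (hb0 j)] at h1
      norm_num at h1
      exact h1.trans (mul_le_mul_of_nonneg_left hE (WA.epow_nonneg (by norm_num) q))
    have hdist : ∀ i j : Fin n, i ≠ j →
        lam * ‖y i - y j‖ ≤ ‖(y i - Wcorr f y i) - (y j - Wcorr f y j)‖ := by
      intro i j hij
      have hD0 : 0 ≤ ‖y i - y j‖ := norm_nonneg _
      have hdi : dsep y i ≤ ‖y i - y j‖ := WA.dsep_le hij.symm
      have hdj : dsep y j ≤ ‖y i - y j‖ := by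
        rw [norm_sub_rev]
        exact WA.dsep_le hij
      have hWi : ‖Wcorr f y i‖ ≤ (1 + t) * (b i * ‖y i - y j‖) := by
        refine (hW i).trans ?_
        rw [← hbd i]
        exact mul_le_mul_of_nonneg_left (mul_le_mul_of_nonneg_left hdi (hb0 i))
          (by linarith : (0:ℝ) ≤ 1 + t)
      have hWj : ‖Wcorr f y j‖ ≤ (1 + t) * (b j * ‖y i - y j‖) := by
        refine (hW j).trans ?_
        rw [← hbd j]
        exact mul_le_mul_of_nonneg_left (mul_le_mul_of_nonneg_left hdj (hb0 j))
          (by linarith : (0:ℝ) ≤ 1 + t)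
      have htri : ‖y i - y j‖ - (‖Wcorr f y i‖ + ‖Wcorr f y j‖)
          ≤ ‖(y i - Wcorr f y i) - (y j - Wcorr f y j)‖ := by
        have e : (y i - Wcorr f y i) - (y j - Wcorr f y j)
            = (y i - y j) - (Wcorr f y i - Wcorr f y j) := by ring
        rw [e]
        have h1 := norm_sub_norm_le (y i - y j) (Wcorr f y i - Wcorr f y j)
        have h2 := norm_sub_le (Wcorr f y i) (Wcorr f y j)
        linarith
      have h3 : (b i + b j) * ((1 + t) * ‖y i - y j‖)
          ≤ (epow 2 q * c t) * ((1 + t) * ‖y i - y j‖) :=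
        mul_le_mul_of_nonneg_right (hpair i j hij)
          (mul_nonneg (by linarith : (0:ℝ) ≤ 1 + t) hD0)
      have hWsum : ‖Wcorr f y i‖ + ‖Wcorr f y j‖
          ≤ (epow 2 q * c t) * ((1 + t) * ‖y i - y j‖) := by
        calc ‖Wcorr f y i‖ + ‖Wcorr f y j‖
            ≤ (1 + t) * (b i * ‖y i - y j‖) + (1 + t) * (b j * ‖y i - y j‖) :=
              add_le_add hWi hWj
          _ = (b i + b j) * ((1 + t) * ‖y i - y j‖) := by ring
          _ ≤ (epow 2 q * c t) * ((1 + t) * ‖y i - y j‖) := h3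
      have h5 : lam * ‖y i - y j‖
          = ‖y i - y j‖ - (epow 2 q * c t) * ((1 + t) * ‖y i - y j‖) := by
        rw [hlamdef]; ring
      linarith
    have hinj' : Function.Injective (fun i => y i - Wcorr f y i) := by
      intro i j hij
      by_contra hne'
      have h1 := hdist i j hne'
      have h2 : (y i - Wcorr f y i) - (y j - Wcorr f y j) = 0 := sub_eq_zero.mpr hij
      have h3 : 0 < lam * ‖y i - y j‖ :=
        mul_pos hlam_pos (norm_pos_iff.mpr (sub_ne_zero_of_ne (fun h => hne' (hy h))))
      rw [h2, norm_zero] at h1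
      linarith
    have hd' : ∀ i, lam * dsep y i ≤ dsep (fun j => y j - Wcorr f y j) i := by
      intro i
      apply WA.le_dsep hn
      intro j hj
      calc lam * dsep y i ≤ lam * ‖y i - y j‖ :=
            mul_le_mul_of_nonneg_left (WA.dsep_le hj) hlam_pos.le
        _ ≤ ‖(y i - Wcorr f y i) - (y j - Wcorr f y j)‖ := hdist i j (Ne.symm hj)
    have hdp : ∀ i, 0 < dsep (fun j => y j - Wcorr f y j) i := WA.dsep_pos hn hinj'
    have hb' : ∀ i, ‖(y i - Wcorr f y i) - ξ i‖ / dsep (fun j => y j - Wcorr f y j) i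
        ≤ (t/lam) * b i := by
      intro i
      calc ‖(y i - Wcorr f y i) - ξ i‖ / dsep (fun j => y j - Wcorr f y j) i
          ≤ (t * ‖y i - ξ i‖) / (lam * dsep y i) :=
            div_le_div₀ (mul_nonneg ht0.le (norm_nonneg _)) (hstep1 i)
              (mul_pos hlam_pos (hd i)) (hd' i)
        _ = (t/lam) * b i := by
            rw [hbdef]
            show (t * ‖y i - ξ i‖) / (lam * dsep y i) = (t/lam) * (‖y i - ξ i‖ / dsep y i)
            rw [div_mul_div_comm]
    refine ⟨hstep1, hinj', ?_⟩
    have hfin : pnorm p (fun i => ‖(y i - Wcorr f y i) - ξ i‖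
          / dsep (fun j => y j - Wcorr f y j) i) ≤ (t/lam) * pnorm p b :=
      WA.pnorm_le_mul hp (by omega) (div_nonneg ht0.le hlam_pos.le)
        (fun i => by
          rw [abs_of_nonneg (div_nonneg (norm_nonneg _) (hdp i).le)]
          exact hb' i) hb0
    have h2 : (t/lam) * pnorm p b ≤ (t/lam) * c t :=
      mul_le_mul_of_nonneg_left hE (div_nonneg ht0.le hlam_pos.le)
    have h3 : (t/lam) * c t ≤ c (t ^ 2) := by
      rw [div_mul_eq_mul_div, div_le_iff₀ hlam_pos]
      linarith [hσct]
    exact hfin.trans (h2.trans h3)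

/-- third local convergence theorem for the Weierstrass method, with a
nondecreasing control function `c : [0,1) → ℝ₊` satisfying
`c(t) ≤ (n−1)^{1/p}((1+t)^{1/(n−1)} − 1)` and, for some `σ ∈ (0,1)`,
`t·c(t) ≤ c(t²)(1 − 2^{1/q}(1+t)c(t))` on `[0,σ]`. -/
theorem weierstrass_local_convergence_third
    {K : Type*} [NormedField K] {n : ℕ} (hn : 2 ≤ n)
    (f : Polynomial K) (hdeg : f.natDegree = n)
    (ξ : Fin n → K) (hroot : IsRootVector f ξ)
    (p q : ℝ≥0∞) (hp : 1 ≤ p) (hpq : 1 / p + 1 / q = 1)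
    (c : ℝ → ℝ)
    (hc_nonneg : ∀ t ∈ Set.Ico (0:ℝ) 1, 0 ≤ c t)
    (hc_mono : ∀ s ∈ Set.Ico (0:ℝ) 1, ∀ t ∈ Set.Ico (0:ℝ) 1, s ≤ t → c s ≤ c t)
    (hc_bound : ∀ t ∈ Set.Ico (0:ℝ) 1,
      c t ≤ epow ((n : ℝ) - 1) p * ((1 + t) ^ ((1:ℝ) / ((n:ℝ) - 1)) - 1))
    (σ : ℝ) (hσ : σ ∈ Set.Ioo (0:ℝ) 1)
    (hσc : ∀ t ∈ Set.Icc (0:ℝ) σ,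
      t * c t ≤ c (t ^ 2) * (1 - epow 2 q * (1 + t) * c t))
    (x : ℕ → Fin n → K) (hx0 : Function.Injective (x 0))
    (hinit : pnorm p (fun i => ‖x 0 i - ξ i‖ / dsep (x 0) i) ≤ c σ)
    (hiter : ∀ k : ℕ, x (k+1) = fun i => x k i - Wcorr f (x k) i) :
    Function.Injective ξ ∧
    (∀ k : ℕ, Function.Injective (x k)) ∧
    (∀ i : Fin n, Filter.Tendsto (fun k => x k i) Filter.atTop (nhds (ξ i))) ∧
    (∀ k : ℕ, ∀ i : Fin n, ‖x (k+1) i - ξ i‖ ≤ σ ^ 2 ^ k * ‖x k i - ξ i‖) ∧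
    (∀ k : ℕ, ∀ i : Fin n, ‖x k i - ξ i‖ ≤ σ ^ (2 ^ k - 1) * ‖x 0 i - ξ i‖) := by
  have hσ0 := hσ.1
  have hσ1 := hσ.2
  have hf0 : f ≠ 0 := by
    intro h
    rw [h] at hdeg
    simp at hdeg
    omega
  have ha : f.leadingCoeff ≠ 0 := Polynomial.leadingCoeff_ne_zero.mpr hf0
  have htpos : ∀ k : ℕ, 0 < σ ^ 2 ^ k := fun k => pow_pos hσ0 _
  have htle : ∀ k : ℕ, σ ^ 2 ^ k ≤ σ := fun k => by
    calc σ ^ 2 ^ k ≤ σ ^ 1 :=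
          pow_le_pow_of_le_one hσ0.le hσ1.le Nat.one_le_two_pow
      _ = σ := pow_one σ
  have inv : ∀ k : ℕ, Function.Injective (x k) ∧
      pnorm p (fun i => ‖x k i - ξ i‖ / dsep (x k) i) ≤ c (σ ^ 2 ^ k) := by
    intro k
    induction k with
    | zero => exact ⟨hx0, by simpa using hinit⟩
    | succ k ih =>
      have hs := WA.step hn f ξ hroot ha p q hp hpq c hc_nonneg hc_bound σ hσ hσc
        (x k) ih.1 (σ ^ 2 ^ k) (htpos k) (htle k) ih.2
      have hexp : (σ ^ 2 ^ k) ^ 2 = σ ^ 2 ^ (k + 1) := by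
        rw [← pow_mul, pow_succ]
      constructor
      · rw [hiter k]; exact hs.2.1
      · rw [hiter k]
        have h2 := hs.2.2
        rw [hexp] at h2
        exact h2
  have ineq1 : ∀ k : ℕ, ∀ i : Fin n, ‖x (k+1) i - ξ i‖ ≤ σ ^ 2 ^ k * ‖x k i - ξ i‖ := by
    intro k i
    have hs := WA.step hn f ξ hroot ha p q hp hpq c hc_nonneg hc_bound σ hσ hσc
      (x k) (inv k).1 (σ ^ 2 ^ k) (htpos k) (htle k) (inv k).2
    rw [hiter k]
    exact hs.1 i
  have ineq2 : ∀ k : ℕ, ∀ i : Fin n, ‖x k i - ξ i‖ ≤ σ ^ (2 ^ k - 1) * ‖x 0 i - ξ i‖ := by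
    intro k
    induction k with
    | zero => intro i; simp
    | succ k ih =>
      intro i
      have h3 : ‖x (k+1) i - ξ i‖ ≤ σ ^ 2 ^ k * (σ ^ (2 ^ k - 1) * ‖x 0 i - ξ i‖) :=
        (ineq1 k i).trans (mul_le_mul_of_nonneg_left (ih i) (htpos k).le)
      have h4 : σ ^ 2 ^ k * σ ^ (2 ^ k - 1) = σ ^ (2 ^ (k+1) - 1) := by
        rw [← pow_add]
        congr 1
        have h5 : 1 ≤ 2 ^ k := Nat.one_le_two_pow
        have h6 : 2 ^ (k + 1) = 2 * 2 ^ k := by rw [pow_succ]; ring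
        omega
      calc ‖x (k+1) i - ξ i‖ ≤ σ ^ 2 ^ k * (σ ^ (2 ^ k - 1) * ‖x 0 i - ξ i‖) := h3
        _ = σ ^ (2 ^ (k+1) - 1) * ‖x 0 i - ξ i‖ := by rw [← mul_assoc, h4]
  have htend : ∀ i : Fin n, Filter.Tendsto (fun k => x k i) Filter.atTop (nhds (ξ i)) := by
    intro i
    rw [tendsto_iff_norm_sub_tendsto_zero]
    apply squeeze_zero (fun k => norm_nonneg _) (fun k => ineq2 k i)
    have h1 : Filter.Tendsto (fun m : ℕ => σ ^ m) Filter.atTop (nhds 0) :=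
      tendsto_pow_atTop_nhds_zero_of_lt_one hσ0.le hσ1
    have h2 : Filter.Tendsto (fun k : ℕ => 2 ^ k - 1) Filter.atTop Filter.atTop :=
      Filter.tendsto_atTop_mono (fun k => by
        simp only [id_eq]
        have := Nat.lt_two_pow_self (n := k)
        omega) Filter.tendsto_id
    have h4 := (h1.comp h2).mul_const ‖x 0 i - ξ i‖
    rw [zero_mul] at h4
    exact h4
  have hcσ : 0 ≤ c σ := hc_nonneg σ ⟨hσ0.le, hσ1⟩
  have hξ : Function.Injective ξ := by
    have hd0 := WA.dsep_pos hn hx0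
    rcases eq_or_lt_of_le hcσ with hc0 | hc0
    · -- c σ = 0 : then x 0 = ξ and ξ is injective
      have hyξ : ∀ i, x 0 i = ξ i := by
        intro i
        have hb := WA.abs_le_pnorm hp (fun i => ‖x 0 i - ξ i‖ / dsep (x 0) i) i
        have h2 : |‖x 0 i - ξ i‖ / dsep (x 0) i| ≤ 0 := hb.trans (hinit.trans hc0.symm.le)
        have h1 : ‖x 0 i - ξ i‖ / dsep (x 0) i = 0 :=
          abs_eq_zero.mp (le_antisymm h2 (abs_nonneg _))
        rcases div_eq_zero_iff.mp h1 with h | h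
        · exact sub_eq_zero.mp (norm_eq_zero.mp h)
        · exact absurd h (hd0 i).ne'
      intro i j hij
      apply hx0
      rw [hyξ i, hyξ j, hij]
    · -- c σ > 0
      have hσct := hσc σ ⟨hσ0.le, le_refl σ⟩
      have hσ2I : σ ^ 2 ∈ Set.Ico (0:ℝ) 1 := ⟨sq_nonneg σ, by nlinarith⟩
      have hct2 : 0 ≤ c (σ ^ 2) := hc_nonneg _ hσ2I
      have he0 : 0 ≤ epow 2 q := WA.epow_nonneg (by norm_num) q
      have hlam : 0 < 1 - epow 2 q * (1 + σ) * c σ := by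
        rcases le_or_gt (1 - epow 2 q * (1 + σ) * c σ) 0 with hl | hl
        · exfalso
          have h1 : 0 < σ * c σ := mul_pos hσ0 hc0
          have h2 : c (σ ^ 2) * (1 - epow 2 q * (1 + σ) * c σ) ≤ 0 :=
            mul_nonpos_of_nonneg_of_nonpos hct2 hl
          linarith
        · exact hl
      have hE2 : epow 2 q * c σ < 1 := by
        nlinarith [mul_nonneg he0 hcσ, mul_nonneg hσ0.le (mul_nonneg he0 hcσ)]
      intro i j hij
      by_contra hne'
      set bb : Fin n → ℝ := fun i => ‖x 0 i - ξ i‖ / dsep (x 0) i with hbbdef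
      have hb0 : ∀ i, 0 ≤ bb i := fun i => div_nonneg (norm_nonneg _) (hd0 i).le
      have hpair : bb i + bb j ≤ epow 2 q * c σ := by
        have h1 := WA.sum_abs_le_pnorm hpq bb ({i, j} : Finset (Fin n))
        rw [Finset.sum_pair hne', Finset.card_pair hne',
          abs_of_nonneg (hb0 i), abs_of_nonneg (hb0 j)] at h1
        norm_num at h1
        exact h1.trans (mul_le_mul_of_nonneg_left hinit (WA.epow_nonneg (by norm_num) q))
      have hD : 0 < ‖x 0 i - x 0 j‖ :=
        norm_pos_iff.mpr (sub_ne_zero_of_ne (fun h => hne' (hx0 h)))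
      have hdi : dsep (x 0) i ≤ ‖x 0 i - x 0 j‖ := WA.dsep_le (Ne.symm hne')
      have hdj : dsep (x 0) j ≤ ‖x 0 i - x 0 j‖ := by
        rw [norm_sub_rev]
        exact WA.dsep_le hne'
      have hui : ‖x 0 i - ξ i‖ ≤ bb i * ‖x 0 i - x 0 j‖ := by
        calc ‖x 0 i - ξ i‖ = bb i * dsep (x 0) i :=
              (div_mul_cancel₀ (‖x 0 i - ξ i‖) (hd0 i).ne').symm
          _ ≤ bb i * ‖x 0 i - x 0 j‖ := mul_le_mul_of_nonneg_left hdi (hb0 i)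
      have huj : ‖x 0 j - ξ j‖ ≤ bb j * ‖x 0 i - x 0 j‖ := by
        calc ‖x 0 j - ξ j‖ = bb j * dsep (x 0) j :=
              (div_mul_cancel₀ (‖x 0 j - ξ j‖) (hd0 j).ne').symm
          _ ≤ bb j * ‖x 0 i - x 0 j‖ := mul_le_mul_of_nonneg_left hdj (hb0 j)
      have htri : ‖x 0 i - x 0 j‖ ≤ ‖x 0 i - ξ i‖ + ‖x 0 j - ξ j‖ := by
        have e : x 0 i - x 0 j = (x 0 i - ξ i) - (x 0 j - ξ j) := by
          rw [hij]; ring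
        calc ‖x 0 i - x 0 j‖ = ‖(x 0 i - ξ i) - (x 0 j - ξ j)‖ := by rw [e]
          _ ≤ ‖x 0 i - ξ i‖ + ‖x 0 j - ξ j‖ := norm_sub_le _ _
      have h6 : ‖x 0 i - x 0 j‖ ≤ bb i * ‖x 0 i - x 0 j‖ + bb j * ‖x 0 i - x 0 j‖ := by
        linarith
      have h7 : (bb i + bb j) * ‖x 0 i - x 0 j‖ ≤ (epow 2 q * c σ) * ‖x 0 i - x 0 j‖ :=
        mul_le_mul_of_nonneg_right hpair hD.le
      have h7' : (bb i + bb j) * ‖x 0 i - x 0 j‖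
          = bb i * ‖x 0 i - x 0 j‖ + bb j * ‖x 0 i - x 0 j‖ := by ring
      have h8 : (epow 2 q * c σ) * ‖x 0 i - x 0 j‖ < 1 * ‖x 0 i - x 0 j‖ :=
        mul_lt_mul_of_pos_right hE2 hD
      rw [one_mul] at h8
      linarith
  exact ⟨hξ, fun k => (inv k).1, htend, ineq1, ineq2⟩
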